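/- Let L be a finitely generated free ℤ-module equipped with a symmetric ℤ-valued bilinear form (·,·) that is even and unimodular, and let ρ ∈ L be a primitive isotropic vector (i.e. (ρ,ρ) = 0 and ρ = k·x with k ∈ ℤ, x ∈ L implies k = 1 or k = -1). Then there exists ρ' ∈ L with (ρ',ρ') = 0 and (ρ,ρ') = 1. -/

import Mathlib

/-- In an even unimodular lattice, every primitive isotropic vector `ρ` can be
completed by an isotropic vector `ρ'` with `(ρ, ρ') = 1`. -/
theorem primitive_isotropic_complement {L : Type*} [AddCommGroup L] [Module ℤ L]
    [Module.Free ℤ L] [Module.Finite ℤ L]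
    (B : L →ₗ[ℤ] L →ₗ[ℤ] ℤ) (hsymm : ∀ x y : L, B x y = B y x)
    (heven : ∀ x : L, ∃ k : ℤ, B x x = 2 * k)
    (hunimod : Function.Bijective (B : L → (L →ₗ[ℤ] ℤ)))
    (ρ : L) (hiso : B ρ ρ = 0)
    (hprim : ∀ (k : ℤ) (x : L), ρ = k • x → k = 1 ∨ k = -1) :
    ∃ ρ' : L, B ρ' ρ' = 0 ∧ B ρ ρ' = 1 := by
  have hρ0 : ρ ≠ 0 := by
    intro h
    rcases hprim 2 0 (by rw [h]; exact (zsmul_zero 2).symm) with h2 | h2 <;> omega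
  -- the range of `B ρ` is a principal ideal of ℤ
  set I : Ideal ℤ := LinearMap.range (B ρ) with hI
  obtain ⟨n, hn⟩ : ∃ n : ℤ, I = Ideal.span {n} :=
    ⟨Submodule.IsPrincipal.generator I, (Submodule.IsPrincipal.span_singleton_generator I).symm⟩
  have hdvd : ∀ x : L, n ∣ B ρ x := by
    intro x
    have : B ρ x ∈ I := ⟨x, rfl⟩
    rwa [hn, Ideal.mem_span_singleton] at this
  have hn0 : n ≠ 0 := by
    intro h
    have hB0 : B ρ = 0 := by
      ext x
      have := hdvd x
      simpa [h, zero_dvd_iff] using this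
    have : ρ = 0 := hunimod.1 (by simp [hB0])
    exact hρ0 this
  -- the functional x ↦ (B ρ x) / n
  have hf : ∃ f : L →ₗ[ℤ] ℤ, ∀ x, n * f x = B ρ x := by
    refine ⟨{ toFun := fun x => B ρ x / n, map_add' := ?_, map_smul' := ?_ },
      fun x => Int.mul_ediv_cancel' (hdvd x)⟩
    · intro a b
      obtain ⟨c, hc⟩ := hdvd a
      obtain ⟨d, hd⟩ := hdvd b
      simp [hc, hd, ← mul_add, Int.mul_ediv_cancel_left _ hn0]
    · intro m a
      obtain ⟨c, hc⟩ := hdvd a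
      simp only [hc, RingHom.id_apply, map_smul, smul_eq_mul]
      rw [mul_left_comm, Int.mul_ediv_cancel_left _ hn0, Int.mul_ediv_cancel_left _ hn0]
  obtain ⟨f, hfn⟩ := hf
  obtain ⟨y, hy⟩ := hunimod.2 f
  have hρy : ρ = n • y := by
    apply hunimod.1
    ext x
    simp [hy]
    exact (hfn x).symm
  have hn1 : n = 1 ∨ n = -1 := hprim n y hρy
  -- get σ with B ρ σ = 1
  have hmem : n ∈ I := by rw [hn]; exact Ideal.mem_span_singleton_self n
  obtain ⟨σ₀, hσ₀⟩ := hmem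
  have hσ : ∃ σ : L, B ρ σ = 1 := by
    rcases hn1 with h | h
    · exact ⟨σ₀, by rw [hσ₀, h]⟩
    · exact ⟨-σ₀, by rw [map_neg, hσ₀, h]; ring⟩
  obtain ⟨σ, hσ1⟩ := hσ
  obtain ⟨k, hk⟩ := heven σ
  refine ⟨σ - k • ρ, ?_, ?_⟩
  · have hsr : B σ ρ = 1 := by rw [hsymm]; exact hσ1
    simp [map_sub, map_smul, hk, hσ1, hsr, hiso]
    ring
  · simp [map_sub, map_smul, hσ1, hiso]
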